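/- The growth order of the entire function z ↦ ∑_{n≥0} (-1)ⁿ cⁿ z^{2n} / (n! · Γ(qn + a)), where q is a positive integer, c > 0 and a > 0, equals 1/(1+q). In particular the growth order is strictly between 0 and 1. -/

import Mathlib

open Filter Real Topology

private lemma log_factorial_le (n : ℕ) : Real.log n.factorial ≤ (n : ℝ) * Real.log n := by
  have h : (n.factorial : ℝ) ≤ (n : ℝ) ^ n := by exact_mod_cast n.factorial_le_pow
  calc Real.log n.factorial ≤ Real.log ((n : ℝ) ^ n) :=
        Real.log_le_log (by exact_mod_cast n.factorial_pos) h
    _ = (n : ℝ) * Real.log n := Real.log_pow n n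

private lemma le_log_factorial (n : ℕ) :
    (n : ℝ) * Real.log n - n ≤ Real.log n.factorial := by
  rcases Nat.eq_zero_or_pos n with h | h
  · simp [h]
  have h1 : ((n : ℝ)) ^ n / n.factorial ≤ Real.exp n :=
    Real.pow_div_factorial_le_exp (n : ℝ) (by positivity) n
  have hfpos : (0 : ℝ) < n.factorial := by exact_mod_cast n.factorial_pos
  have h2 : ((n : ℝ)) ^ n ≤ Real.exp n * n.factorial := by
    rw [div_le_iff₀ hfpos] at h1; linarith [h1]
  have hnp : (0 : ℝ) < (n : ℝ) ^ n := pow_pos (by exact_mod_cast h) n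
  have h3 := Real.log_le_log hnp h2
  rw [Real.log_pow, Real.log_mul (Real.exp_ne_zero _) hfpos.ne', Real.log_exp] at h3
  linarith

private lemma gamma_nat_cast (m : ℕ) (hm : 1 ≤ m) :
    Real.Gamma (m : ℝ) = (m - 1).factorial := by
  have h : (m : ℝ) = ((m - 1 : ℕ) : ℝ) + 1 := by
    rw [Nat.cast_sub hm]; ring
  rw [h, Real.Gamma_nat_eq_factorial]

private lemma one_div_log_tendsto : Tendsto (fun n : ℕ => 1 / Real.log n) atTop (𝓝 0) := by
  have := (Real.tendsto_log_atTop.comp tendsto_natCast_atTop_atTop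
    (α := ℕ)).inv_tendsto_atTop
  simpa [one_div, Function.comp, Pi.inv_def] using this

private lemma lin_tendsto (α β : ℝ) :
    Tendsto (fun n : ℕ => (α * n + β) / ((n : ℝ) * Real.log n)) atTop (𝓝 0) := by
  have h1 : Tendsto (fun n : ℕ => α + β / n) atTop (𝓝 α) := by
    simpa using tendsto_const_nhds.add (tendsto_const_div_atTop_nhds_zero_nat β)
  have h := h1.mul one_div_log_tendsto
  rw [mul_zero] at h
  refine h.congr' ?_
  filter_upwards [eventually_ge_atTop 2] with n hn
  have hn0 : (n : ℝ) ≠ 0 := Nat.cast_ne_zero.2 (by omega)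
  have hn2 : (2 : ℝ) ≤ (n : ℝ) := by exact_mod_cast hn
  have hL : Real.log n ≠ 0 := (Real.log_pos (by linarith)).ne'
  field_simp

private lemma main_tendsto (k r : ℝ) (hk : 0 < k) :
    Tendsto (fun n : ℕ => ((k * n + r) * Real.log (k * n + r)) / ((n : ℝ) * Real.log n))
      atTop (𝓝 k) := by
  have hrat : Tendsto (fun n : ℕ => (k * n + r) / n) atTop (𝓝 k) := by
    have h1 : Tendsto (fun n : ℕ => k + r / n) atTop (𝓝 k) := by
      simpa using tendsto_const_nhds.add (tendsto_const_div_atTop_nhds_zero_nat r)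
    refine h1.congr' ?_
    filter_upwards [eventually_ge_atTop 1] with n hn
    have hn0 : (n : ℝ) ≠ 0 := Nat.cast_ne_zero.2 (by omega)
    rw [add_div, mul_div_assoc, div_self hn0, mul_one]
  have hbig : Tendsto (fun n : ℕ => k * (n : ℝ) + r) atTop atTop :=
    tendsto_atTop_add_const_right _ r
      (tendsto_natCast_atTop_atTop.const_mul_atTop hk)
  have hloglim : Tendsto (fun n : ℕ => Real.log ((k * n + r) / n)) atTop (𝓝 (Real.log k)) :=
    (Real.continuousAt_log hk.ne').tendsto.comp hrat
  have hlog : Tendsto (fun n : ℕ => Real.log (k * n + r) / Real.log n) atTop (𝓝 1) := by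
    have h := hloglim.mul one_div_log_tendsto
    rw [mul_zero] at h
    have h3 := (tendsto_const_nhds (x := (1 : ℝ)) (f := atTop (α := ℕ))).add h
    rw [add_zero] at h3
    refine h3.congr' ?_
    filter_upwards [eventually_ge_atTop 2, hbig.eventually_ge_atTop 1] with n hn hpos
    have hn2 : (2 : ℝ) ≤ (n : ℝ) := by exact_mod_cast hn
    have hlogn : 0 < Real.log n := Real.log_pos (by linarith)
    have hnr0 : k * (n : ℝ) + r ≠ 0 := by linarith
    have hn0 : (n : ℝ) ≠ 0 := by linarith
    rw [Real.log_div hnr0 hn0]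
    field_simp
    ring
  have h := hrat.mul hlog
  rw [show k * 1 = k by ring] at h
  refine h.congr fun n => ?_
  rw [div_mul_div_comm]

private lemma shape_tendsto (k r α β : ℝ) (hk : 0 < k) :
    Tendsto (fun n : ℕ =>
        ((n : ℝ) * Real.log n + (k * n + r) * Real.log (k * n + r) + (α * n + β)) /
          ((n : ℝ) * Real.log n)) atTop (𝓝 (1 + k)) := by
  have h1 : Tendsto (fun n : ℕ => ((n : ℝ) * Real.log n) / ((n : ℝ) * Real.log n))
      atTop (𝓝 1) := by
    refine tendsto_const_nhds.congr' ?_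
    filter_upwards [eventually_ge_atTop 2] with n hn
    have hn2 : (2 : ℝ) ≤ (n : ℝ) := by exact_mod_cast hn
    have hD : (0 : ℝ) < (n : ℝ) * Real.log n :=
      mul_pos (by linarith) (Real.log_pos (by linarith))
    exact (div_self hD.ne').symm
  have h := (h1.add (main_tendsto k r hk)).add (lin_tendsto α β)
  rw [add_zero] at h
  refine h.congr fun n => ?_
  rw [← add_div, ← add_div]

theorem stmt_3 (q : ℕ) (hq : 1 ≤ q) (c a : ℝ) (hc : 0 < c) (ha : 0 < a) :
    Filter.limsup
      (fun n : ℕ =>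
        ((n : ℝ) * Real.log n) /
          (-Real.log (c ^ n / ((n.factorial : ℝ) * Real.Gamma ((q : ℝ) * n + a)))))
      Filter.atTop = 1 / (1 + (q : ℝ)) ∧
    0 < 1 / (1 + (q : ℝ)) ∧ 1 / (1 + (q : ℝ)) < 1 := by
  have hq1 : (1 : ℝ) ≤ (q : ℝ) := by exact_mod_cast hq
  have hq0 : (0 : ℝ) < (q : ℝ) := by linarith
  set A : ℕ := ⌈a⌉₊ with hA
  have haA : a ≤ (A : ℝ) := Nat.le_ceil a
  have hA1 : 1 ≤ A := Nat.one_le_ceil_iff.2 ha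
  set g : ℕ → ℝ := fun n =>
    Real.log n.factorial + Real.log (Real.Gamma ((q : ℝ) * n + a)) - n * Real.log c with hg
  have hΓpos : ∀ n : ℕ, 0 < Real.Gamma ((q : ℝ) * n + a) := fun n =>
    Real.Gamma_pos_of_pos (by positivity)
  have hrw : ∀ n : ℕ,
      -Real.log (c ^ n / ((n.factorial : ℝ) * Real.Gamma ((q : ℝ) * n + a))) = g n := by
    intro n
    have hf : (0 : ℝ) < n.factorial := by exact_mod_cast n.factorial_pos
    rw [hg, Real.log_div (by positivity) (by positivity),
      Real.log_mul hf.ne' (hΓpos n).ne', Real.log_pow]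
    ring
  -- squeeze for g/(n log n)
  have hgD : Tendsto (fun n : ℕ => g n / ((n : ℝ) * Real.log n)) atTop
      (𝓝 (1 + (q : ℝ))) := by
    refine tendsto_of_tendsto_of_tendsto_of_le_of_le'
      (shape_tendsto (q : ℝ) (-1) (-(1 + q + Real.log c)) 1 hq0)
      (shape_tendsto (q : ℝ) ((A : ℝ) - 1) (-(Real.log c)) 0 hq0) ?_ ?_
    · -- lower bound
      filter_upwards [eventually_ge_atTop 2] with n hn
      have hn2 : (2 : ℝ) ≤ (n : ℝ) := by exact_mod_cast hn
      have hD : (0 : ℝ) < (n : ℝ) * Real.log n :=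
        mul_pos (by linarith) (Real.log_pos (by linarith))
      have hm2 : 2 ≤ q * n := le_trans hn (Nat.le_mul_of_pos_left n hq)
      have hm2' : (2 : ℝ) ≤ ((q * n : ℕ) : ℝ) := by exact_mod_cast hm2
      have hcast : ((q * n : ℕ) : ℝ) = (q : ℝ) * n := by push_cast; ring
      have hmono : Real.Gamma ((q * n : ℕ) : ℝ) ≤ Real.Gamma ((q : ℝ) * n + a) := by
        refine Real.Gamma_strictMonoOn_Ici.monotoneOn hm2' ?_ ?_
        · simp only [Set.mem_Ici]; linarith [hcast]
        · rw [hcast]; linarith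
      rw [gamma_nat_cast (q * n) (by omega)] at hmono
      have hlogΓ : Real.log ((q * n - 1).factorial : ℝ) ≤
          Real.log (Real.Gamma ((q : ℝ) * n + a)) :=
        Real.log_le_log (by exact_mod_cast (q * n - 1).factorial_pos) hmono
      have hlf := le_log_factorial (q * n - 1)
      have hcast2 : ((q * n - 1 : ℕ) : ℝ) = (q : ℝ) * n - 1 := by
        rw [Nat.cast_sub (by omega)]; push_cast; ring
      rw [hcast2] at hlf
      have hnf := le_log_factorial n
      have hnum : (n : ℝ) * Real.log n + ((q : ℝ) * n + -1) * Real.log ((q : ℝ) * n + -1) +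
          (-(1 + q + Real.log c) * n + 1) ≤ g n := by
        simp only [hg]
        have h9 : ((q : ℝ) * n + -1) = (q : ℝ) * n - 1 := by ring
        rw [h9]
        linarith [hlogΓ, hlf, hnf]
      exact div_le_div_of_nonneg_right hnum hD.le
    · -- upper bound
      filter_upwards [eventually_ge_atTop 2] with n hn
      have hn2 : (2 : ℝ) ≤ (n : ℝ) := by exact_mod_cast hn
      have hD : (0 : ℝ) < (n : ℝ) * Real.log n :=
        mul_pos (by linarith) (Real.log_pos (by linarith))
      have hm2 : 2 ≤ q * n := le_trans hn (Nat.le_mul_of_pos_left n hq)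
      have hcast : ((q * n + A : ℕ) : ℝ) = (q : ℝ) * n + A := by push_cast; ring
      have hmono : Real.Gamma ((q : ℝ) * n + a) ≤ Real.Gamma ((q * n + A : ℕ) : ℝ) := by
        have hm2' : (2 : ℝ) ≤ ((q * n : ℕ) : ℝ) := by exact_mod_cast hm2
        have hqn : (2 : ℝ) ≤ (q : ℝ) * n := by
          rw [← show ((q * n : ℕ) : ℝ) = (q : ℝ) * n by push_cast; ring]; exact hm2'
        refine Real.Gamma_strictMonoOn_Ici.monotoneOn ?_ ?_ ?_
        · simp only [Set.mem_Ici]; linarith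
        · simp only [Set.mem_Ici]; rw [hcast]
          have : (1 : ℝ) ≤ A := by exact_mod_cast hA1
          linarith
        · rw [hcast]; linarith
      rw [gamma_nat_cast (q * n + A) (by omega)] at hmono
      have hlogΓ : Real.log (Real.Gamma ((q : ℝ) * n + a)) ≤
          Real.log ((q * n + A - 1).factorial : ℝ) :=
        Real.log_le_log (hΓpos n) hmono
      have hlf := log_factorial_le (q * n + A - 1)
      have hcast2 : ((q * n + A - 1 : ℕ) : ℝ) = (q : ℝ) * n + ((A : ℝ) - 1) := by
        rw [Nat.cast_sub (by omega)]; push_cast; ring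
      rw [hcast2] at hlf
      have hnf := log_factorial_le n
      have hnum : g n ≤ (n : ℝ) * Real.log n +
          ((q : ℝ) * n + ((A : ℝ) - 1)) * Real.log ((q : ℝ) * n + ((A : ℝ) - 1)) +
          (-(Real.log c) * n + 0) := by
        simp only [hg]
        linarith [hlogΓ, hlf, hnf]
      exact div_le_div_of_nonneg_right hnum hD.le
  -- conclude
  have hne : (1 + (q : ℝ)) ≠ 0 := by positivity
  have hfinal : Tendsto (fun n : ℕ => ((n : ℝ) * Real.log n) / g n) atTop
      (𝓝 (1 / (1 + (q : ℝ)))) := by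
    have h := hgD.inv₀ hne
    rw [← one_div] at h
    refine h.congr fun n => ?_
    rw [inv_div]
  have key : Tendsto
      (fun n : ℕ =>
        ((n : ℝ) * Real.log n) /
          (-Real.log (c ^ n / ((n.factorial : ℝ) * Real.Gamma ((q : ℝ) * n + a)))))
      atTop (𝓝 (1 / (1 + (q : ℝ)))) := by
    refine hfinal.congr fun n => ?_
    rw [hrw n]
  refine ⟨key.limsup_eq, by positivity, ?_⟩
  rw [div_lt_one (by positivity)]
  linarith
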